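/- There is no pair (λ, ν) ∈ [0,∞)⁴ × [0,∞)⁴ with λ_j = λ_{j+2} for all j ∈ {0,1} satisfying the system: for every j ∈ {0,1,2,3} (indices taken modulo 4), −λ_j·log(λ_j) + (9/10)·λ_j − (2/5)·(λ_{j+1} + λ_{j+3}) − (1/10)·λ_{j+2} − ν_j = 0; 0 < ∑_{k=0}^{3} λ_k² < 4; and λ_j·ν_j = 0 for every j ∈ {0,1,2,3}. -/
import Mathlib


open scoped BigOperators

lemma kkt_key_aux {x y : ℝ} (hy : 0 < y) (hxy : y < x) (hx2 : x^2 < 2)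
    (heq : x * Real.log x - y * Real.log y = 8/5 * (x - y)) : False := by
  have hx : 0 < x := hy.trans hxy
  have hlog : Real.log x - Real.log y ≤ x / y - 1 := by
    have h := Real.log_le_sub_one_of_pos (show 0 < x / y from div_pos hx hy)
    rwa [Real.log_div hx.ne' hy.ne'] at h
  have h1 : x * Real.log x - y * Real.log y ≤ (x - y) * (1 + Real.log x) := by
    have hid : x * Real.log x - y * Real.log y
        = (x - y) * Real.log x + y * (Real.log x - Real.log y) := by ring
    rw [hid]
    have h2 : y * (Real.log x - Real.log y) ≤ y * (x / y - 1) :=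
      mul_le_mul_of_nonneg_left hlog hy.le
    have h3 : y * (x / y - 1) = x - y := by field_simp
    nlinarith
  have h4 : 8/5 * (x - y) ≤ (x - y) * (1 + Real.log x) := heq ▸ h1
  have hd : 0 < x - y := sub_pos.mpr hxy
  have h5 : (3:ℝ)/5 ≤ Real.log x := by nlinarith
  have h6 : Real.exp (3/5) ≤ x := by
    calc Real.exp (3/5) ≤ Real.exp (Real.log x) := Real.exp_le_exp.mpr h5
    _ = x := Real.exp_log hx
  have h7 : Real.exp (6/5) ≤ x^2 := by
    have h := mul_le_mul h6 h6 (Real.exp_pos _).le hx.le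
    rwa [← Real.exp_add, show (3:ℝ)/5 + 3/5 = 6/5 by norm_num, ← sq] at h
  have h8 : (6:ℝ)/5 + 1 ≤ Real.exp (6/5) := Real.add_one_le_exp (6/5 : ℝ)
  linarith

/-- the KKT system for the LSI on `ℤ_4` with weight `φ_4 = (0,1,8/5,1)`
has no solution in the region where all opposite pairs are equal
(`λ_j = λ_{j+2}` for `j ∈ {0,1}`; indices modulo 4).
(Note `Real.log 0 = 0`, so the convention `x log x = 0` at `x = 0` holds.) -/
theorem kkt_Z4_opposite_equal :
    ¬ ∃ (l ν : ZMod 4 → ℝ),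
      (∀ j, 0 ≤ l j) ∧ (∀ j, 0 ≤ ν j) ∧
      (l 0 = l 2 ∧ l 1 = l 3) ∧
      (∀ j : ZMod 4,
        -(l j * Real.log (l j)) + (9/10 : ℝ) * l j
          - (2/5 : ℝ) * (l (j+1) + l (j+3)) - (1/10 : ℝ) * l (j+2) - ν j = 0) ∧
      (0 < ∑ k : ZMod 4, l k ^ 2) ∧ ((∑ k : ZMod 4, l k ^ 2) < 4) ∧
      (∀ j, l j * ν j = 0) := by
  rintro ⟨l, ν, hl, hν, ⟨h02, h13⟩, heq, hpos, hlt, hcomp⟩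
  obtain ⟨a, ha⟩ : ∃ a, l 0 = a := ⟨_, rfl⟩
  obtain ⟨b, hb⟩ : ∃ b, l 1 = b := ⟨_, rfl⟩
  have h2 : l 2 = a := by rw [← h02, ha]
  have h3 : l 3 = b := by rw [← h13, hb]
  have e0 := heq 0
  have e1 := heq 1
  rw [show (0 + 1 : ZMod 4) = 1 from by decide, show (0 + 2 : ZMod 4) = 2 from by decide,
      show (0 + 3 : ZMod 4) = 3 from by decide, ha, hb, h2, h3] at e0
  rw [show (1 + 1 : ZMod 4) = 2 from by decide, show (1 + 2 : ZMod 4) = 3 from by decide,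
      show (1 + 3 : ZMod 4) = 0 from by decide, ha, hb, h2, h3] at e1
  have hsum : ∑ k : ZMod 4, l k ^ 2 = a^2 + b^2 + a^2 + b^2 := by
    rw [show (Finset.univ : Finset (ZMod 4)) = {0,1,2,3} from by decide]
    rw [Finset.sum_insert (by decide), Finset.sum_insert (by decide),
        Finset.sum_insert (by decide), Finset.sum_singleton, ha, hb, h2, h3]
    ring
  rw [hsum] at hpos hlt
  have hann : 0 ≤ a := ha ▸ hl 0
  have hbnn : 0 ≤ b := hb ▸ hl 1
  -- a > 0
  have hapos : 0 < a := by
    rcases hann.lt_or_eq with h | h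
    · exact h
    · exfalso
      have hb0 : b = 0 := by
        rw [← h, Real.log_zero] at e0
        have hν0 := hν 0
        nlinarith
      rw [← h, hb0] at hpos; norm_num at hpos
  have hbpos : 0 < b := by
    rcases hbnn.lt_or_eq with h | h
    · exact h
    · exfalso
      have ha0 : a = 0 := by
        rw [← h, Real.log_zero] at e1
        have hν1 := hν 1
        nlinarith
      rw [← h, ha0] at hpos; norm_num at hpos
  have hν0 : ν 0 = 0 := by
    have h := hcomp 0; rw [ha] at h
    rcases mul_eq_zero.mp h with h' | h'
    · exact absurd h' hapos.ne'
    · exact h'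
  have hν1 : ν 1 = 0 := by
    have h := hcomp 1; rw [hb] at h
    rcases mul_eq_zero.mp h with h' | h'
    · exact absurd h' hbpos.ne'
    · exact h'
  rw [hν0] at e0
  rw [hν1] at e1
  have ea : a * Real.log a = 4/5 * (a - b) := by linarith
  have eb : b * Real.log b = 4/5 * (b - a) := by linarith
  rcases lt_trichotomy a b with h | h | h
  · exact kkt_key_aux hapos h (by nlinarith) (by linarith)
  · have hla : Real.log a = 0 := by
      have h0 : a * Real.log a = 0 := by rw [ea, h]; ring
      rcases mul_eq_zero.mp h0 with h' | h'
      · exact absurd h' hapos.ne'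
      · exact h'
    have ha1 : a = 1 := by
      rcases Real.log_eq_zero.mp hla with h' | h' | h'
      · exact absurd h' hapos.ne'
      · exact h'
      · linarith
    rw [ha1, ← h, ha1] at hlt; norm_num at hlt
  · exact kkt_key_aux hbpos h (by nlinarith) (by linarith)
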